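/- Let G be an r-regular k-partite k-uniform hypergraph with partition classes of order n, let Z be a partition class, and let T ⊆ Z. Then the number of independent sets I of G with I ∩ Z = T and I ⊆ T ∪ (V(G)\Z) equals |𝕀(L_G(T))| · 2^{(k-1)n − |N_G(T)|}. -/

import Mathlib

/-- External neighbourhood of a vertex set `S` in a hypergraph with edge set `E`. -/
def hyperNbhd {V : Type*} [DecidableEq V] (E : Finset (Finset V)) (S : Finset V) :
    Finset V :=
  ((E.filter fun e => (e ∩ S).Nonempty).biUnion id) \ S

/-- Edge set of the link graph `L_G(S)`. -/
def linkEdges {V : Type*} [DecidableEq V] (E : Finset (Finset V)) (S : Finset V) :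
    Finset (Finset V) :=
  (E.filter fun e => (e ∩ S).Nonempty).image (fun e => e \ S)

/-- In an `r`-regular `k`-partite `k`-uniform hypergraph `G` with classes of order `n`,
for a partition class `Z` and `T ⊆ Z`, the number of independent sets `I` of `G`
with `I ∩ Z = T` equals `|𝕀(L_G(T))| · 2^((k-1)n - |N_G(T)|)`. -/
theorem indep_count_with_defect_set
    {V : Type*} [Fintype V] [DecidableEq V]
    (k r n : ℕ) (hk : 2 ≤ k)
    (E : Finset (Finset V)) (parts : Fin k → Finset V)
    (hdisj : ∀ i j : Fin k, i ≠ j → Disjoint (parts i) (parts j))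
    (hcover : ∀ v : V, ∃ i, v ∈ parts i)
    (hcard : ∀ i, (parts i).card = n)
    (hedge : ∀ e ∈ E, ∀ i, (e ∩ parts i).card = 1)
    (hreg : ∀ v : V, (E.filter fun e => v ∈ e).card = r)
    (i : Fin k) (T : Finset V) (hT : T ⊆ parts i) :
    (Finset.univ.filter fun I : Finset V =>
        (∀ e ∈ E, ¬ e ⊆ I) ∧ I ∩ parts i = T ∧
          I ⊆ T ∪ (Finset.univ \ parts i)).card
      = ((hyperNbhd E T).powerset.filter fun A : Finset V =>
          ∀ f ∈ linkEdges E T, ¬ f ⊆ A).card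
        * 2 ^ ((k - 1) * n - (hyperNbhd E T).card) := by
  classical
  set Z := parts i with hZdef
  set N := hyperNbhd E T with hNdef
  set W : Finset V := Finset.univ \ Z with hWdef
  have hTZ : T ⊆ Z := hT
  -- for an edge meeting T, its Z-part is inside T
  have hZpart : ∀ e ∈ E, (e ∩ T).Nonempty → e ∩ Z ⊆ T := by
    intro e heE hne
    obtain ⟨a, ha⟩ := Finset.card_eq_one.mp (hedge e heE i)
    obtain ⟨u, hu⟩ := hne
    have huZ : u ∈ e ∩ Z := Finset.mem_inter.mpr
      ⟨(Finset.mem_inter.mp hu).1, hTZ (Finset.mem_inter.mp hu).2⟩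
    have hau : a = u := by
      have := huZ; rw [ha, Finset.mem_singleton] at this; exact this.symm
    intro v hv
    rw [ha, Finset.mem_singleton] at hv
    subst hv; rw [hau]; exact (Finset.mem_inter.mp hu).2
  -- e \ T ⊆ N for edges meeting T
  have hsubN : ∀ e ∈ E, (e ∩ T).Nonempty → e \ T ⊆ N := by
    intro e heE hne v hv
    rw [Finset.mem_sdiff] at hv
    rw [hNdef, hyperNbhd, Finset.mem_sdiff]
    refine ⟨Finset.mem_biUnion.mpr ⟨e, Finset.mem_filter.mpr ⟨heE, hne⟩, hv.1⟩, hv.2⟩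
  have hNW : N ⊆ W := by
    intro v hv
    rw [hNdef, hyperNbhd, Finset.mem_sdiff, Finset.mem_biUnion] at hv
    obtain ⟨⟨e, he, hve⟩, hvT⟩ := hv
    rw [Finset.mem_filter] at he
    rw [hWdef, Finset.mem_sdiff]
    refine ⟨Finset.mem_univ _, fun hvZ => ?_⟩
    exact hvT (hZpart e he.1 he.2 (Finset.mem_inter.mpr ⟨hve, hvZ⟩))
  -- the bijection
  have key : (Finset.univ.filter fun I : Finset V =>
        (∀ e ∈ E, ¬ e ⊆ I) ∧ I ∩ Z = T ∧ I ⊆ T ∪ W).card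
      = ((N.powerset.filter fun A : Finset V =>
          ∀ f ∈ linkEdges E T, ¬ f ⊆ A) ×ˢ (W \ N).powerset).card := by
    apply Finset.card_nbij' (fun I => (I ∩ N, I ∩ (W \ N)))
      (fun p => T ∪ p.1 ∪ p.2)
    · intro I hI
      rw [Finset.mem_coe, Finset.mem_filter] at hI
      obtain ⟨-, hind, hIZ, hIsub⟩ := hI
      have hTI : T ⊆ I := hIZ ▸ Finset.inter_subset_left
      rw [Finset.mem_coe, Finset.mem_product, Finset.mem_filter, Finset.mem_powerset,
        Finset.mem_powerset]
      refine ⟨⟨Finset.inter_subset_right, ?_⟩, Finset.inter_subset_right⟩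
      intro f hf hfA
      rw [linkEdges, Finset.mem_image] at hf
      obtain ⟨e, he, rfl⟩ := hf
      rw [Finset.mem_filter] at he
      refine hind e he.1 (fun v hv => ?_)
      by_cases hvT : v ∈ T
      · exact hTI hvT
      · exact Finset.inter_subset_left (hfA (Finset.mem_sdiff.mpr ⟨hv, hvT⟩))
    · intro p hp
      rw [Finset.mem_coe, Finset.mem_product, Finset.mem_filter, Finset.mem_powerset,
        Finset.mem_powerset] at hp
      obtain ⟨⟨hAN, hPA⟩, hB⟩ := hp
      have hAW : p.1 ⊆ W := hAN.trans hNW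
      have hBW : p.2 ⊆ W := hB.trans (Finset.sdiff_subset)
      rw [Finset.mem_coe, Finset.mem_filter]
      refine ⟨Finset.mem_univ _, ?_, ?_, ?_⟩
      · intro e heE hsub
        obtain ⟨a, ha⟩ := Finset.card_eq_one.mp (hedge e heE i)
        have haeZ : a ∈ e ∩ Z := ha ▸ Finset.mem_singleton_self a
        obtain ⟨hae, haZ⟩ := Finset.mem_inter.mp haeZ
        by_cases haT : a ∈ T
        · -- edge meets T, link edge contained in A
          have hne : (e ∩ T).Nonempty := ⟨a, Finset.mem_inter.mpr ⟨hae, haT⟩⟩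
          refine hPA (e \ T) ?_ ?_
          · rw [linkEdges, Finset.mem_image]
            exact ⟨e, Finset.mem_filter.mpr ⟨heE, hne⟩, rfl⟩
          · intro v hv
            obtain ⟨hve, hvT⟩ := Finset.mem_sdiff.mp hv
            have hvN : v ∈ N := hsubN e heE hne hv
            have := hsub hve
            rw [Finset.mem_union, Finset.mem_union] at this
            rcases this with (h | h) | h
            · exact absurd h hvT
            · exact h
            · exact absurd hvN (Finset.mem_sdiff.mp (hB h)).2
        · -- a ∈ Z but a ∉ T: a cannot be in T ∪ A ∪ B
          have := hsub hae
          rw [Finset.mem_union, Finset.mem_union] at this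
          rcases this with (h | h) | h
          · exact haT h
          · exact (Finset.mem_sdiff.mp (hAW h)).2 haZ
          · exact (Finset.mem_sdiff.mp (hBW h)).2 haZ
      · -- intersection with Z is T
        have hA : p.1 ∩ Z = ∅ := by
          apply Finset.eq_empty_of_forall_notMem
          intro v hv
          obtain ⟨h1, h2⟩ := Finset.mem_inter.mp hv
          exact (Finset.mem_sdiff.mp (hAW h1)).2 h2
        have hBz : p.2 ∩ Z = ∅ := by
          apply Finset.eq_empty_of_forall_notMem
          intro v hv
          obtain ⟨h1, h2⟩ := Finset.mem_inter.mp hv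
          exact (Finset.mem_sdiff.mp (hBW h1)).2 h2
        rw [Finset.union_inter_distrib_right, Finset.union_inter_distrib_right,
          hA, hBz, Finset.inter_eq_left.mpr hTZ]
        simp
      · intro v hv
        rw [Finset.mem_union, Finset.mem_union] at hv
        rw [Finset.mem_union]
        rcases hv with (h | h) | h
        · exact Or.inl h
        · exact Or.inr (hAW h)
        · exact Or.inr (hBW h)
    · -- left inverse
      intro I hI
      rw [Finset.mem_coe, Finset.mem_filter] at hI
      obtain ⟨-, -, hIZ, hIsub⟩ := hI
      have hTI : T ⊆ I := hIZ ▸ Finset.inter_subset_left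
      ext v
      simp only [Finset.mem_union, Finset.mem_inter]
      constructor
      · rintro ((h | ⟨h, -⟩) | ⟨h, -⟩)
        · exact hTI h
        · exact h
        · exact h
      · intro hv
        by_cases hvT : v ∈ T
        · exact Or.inl (Or.inl hvT)
        · have hvW : v ∈ W := by
            have := hIsub hv
            rw [Finset.mem_union] at this
            exact this.resolve_left hvT
          by_cases hvN : v ∈ N
          · exact Or.inl (Or.inr ⟨hv, hvN⟩)
          · exact Or.inr ⟨hv, Finset.mem_sdiff.mpr ⟨hvW, hvN⟩⟩
    · -- right inverse
      intro p hp
      rw [Finset.mem_coe, Finset.mem_product, Finset.mem_filter, Finset.mem_powerset,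
        Finset.mem_powerset] at hp
      obtain ⟨⟨hAN, -⟩, hB⟩ := hp
      have hTN : ∀ v ∈ T, v ∉ N := fun v hv hvN =>
        (Finset.mem_sdiff.mp (hNW hvN)).2 (hTZ hv)
      have hTWN : ∀ v ∈ T, v ∉ W \ N := fun v hv h =>
        (Finset.mem_sdiff.mp (Finset.mem_sdiff.mp h).1).2 (hTZ hv)
      have h1 : (T ∪ p.1 ∪ p.2) ∩ N = p.1 := by
        ext v
        simp only [Finset.mem_inter, Finset.mem_union]
        constructor
        · rintro ⟨(h | h) | h, hvN⟩
          · exact absurd hvN (hTN v h)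
          · exact h
          · exact absurd hvN (Finset.mem_sdiff.mp (hB h)).2
        · intro h; exact ⟨Or.inl (Or.inr h), hAN h⟩
      have h2 : (T ∪ p.1 ∪ p.2) ∩ (W \ N) = p.2 := by
        ext v
        simp only [Finset.mem_inter, Finset.mem_union]
        constructor
        · rintro ⟨(h | h) | h, hvWN⟩
          · exact absurd hvWN (hTWN v h)
          · exact absurd (hAN h) (Finset.mem_sdiff.mp hvWN).2
          · exact h
        · intro h; exact ⟨Or.inr h, hB h⟩
      dsimp only
      rw [h1, h2]
  rw [key, Finset.card_product, Finset.card_powerset]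
  congr 2
  -- |W \ N| = (k-1)n - |N|
  have hunivcard : (Finset.univ : Finset V).card = k * n := by
    have hcov : (Finset.univ : Finset V)
        = (Finset.univ : Finset (Fin k)).biUnion parts := by
      ext v; simpa using hcover v
    rw [hcov, Finset.card_biUnion (fun a _ b _ hab => hdisj a b hab)]
    simp [hcard, Finset.sum_const, Finset.card_univ]
  have hWcard : W.card = (k - 1) * n := by
    rw [hWdef, Finset.card_sdiff_of_subset (Finset.subset_univ _), hunivcard, hcard i,
      Nat.sub_one_mul]
  rw [Finset.card_sdiff_of_subset hNW, hWcard]
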